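/- Let G = {G_n} be a simplicial abelian group, C a small category with a chosen object a₀, and δ a twisted structure on C with coefficients in G. For each n let C_n = (⊕_{x ∈ N(C)_n} (G_n)_x)/(G_n)_{a₀ⁿ}, the direct sum of copies of G_n indexed by the n-simplices of N(C) modulo the copy at the totally degenerate simplex a₀ⁿ, and define ∂_n : C_n → C_{n−1} by ∂_n(g_x) = Σ_{i=0}^n (−1)^i (δ_{v_i}(d_i g))_{d_i x}, where v_i is the i-th vertex of x. Then ∂_n ∘ ∂_{n+1} = 0 for all n ≥ 1, so {C_n, ∂_n} is a chain complex of abelian groups. -/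

import Mathlib

open CategoryTheory Simplicial DirectSum

universe u

attribute [local instance] Classical.decEq

namespace TwistedAb

variable (C : Type u) [SmallCategory C] (G : SimplicialObject AddCommGrpCat.{u}) (a₀ : C)

/-- The abelian group of `n`-simplices of the simplicial abelian group `G`. -/
abbrev An (n : ℕ) : Type u := ↥(G.obj (Opposite.op (SimplexCategory.mk n)))

/-- The face map of the nerve of `C` (whose `n`-simplices are `ComposableArrows C n`). -/
def nerveFace {n : ℕ} (i : Fin (n + 2)) (x : ComposableArrows C (n + 1)) :
    ComposableArrows C n :=
  (nerve C).δ i x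

/-- The totally degenerate `n`-simplex `a₀ⁿ` of the nerve at the base object `a₀`. -/
def basept (n : ℕ) : ComposableArrows C n :=
  (CategoryTheory.Functor.const (Fin (n + 1))).obj a₀

/-- The direct sum of copies of `G_n` indexed by the `n`-simplices of the nerve. -/
abbrev AllSum (n : ℕ) : Type u :=
  ⨁ _ : ComposableArrows C n, An G n

/-- The inclusion of the copy of `G_n` labelled by the simplex `x`. -/
noncomputable def incl {n : ℕ} (x : ComposableArrows C n) : An G n →+ AllSum C G n :=
  DirectSum.of (fun _ : ComposableArrows C n => An G n) x

/-- `C_n = (⊕_{x ∈ N(C)_n} (G_n)_x) / (G_n)_{a₀ⁿ}`: the direct sum of the copies of `G_n`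
indexed by the `n`-simplices, modulo the copy at the totally degenerate simplex `a₀ⁿ`. -/
abbrev Cn (n : ℕ) : Type u :=
  AllSum C G n ⧸ (incl C G (basept C a₀ n)).range

/-- The twisted differential on the direct sum, with values in the quotient:
`∂(g_x) = Σᵢ (−1)^i (δ_{v_i}(d_i g))_{d_i x}`. -/
noncomputable def bdryAux (δ : C → (G ⟶ G)) (n : ℕ) :
    AllSum C G (n + 1) →+ Cn C G a₀ n :=
  DirectSum.toAddMonoid fun x =>
    ∑ i : Fin (n + 2), ((-1 : ℤ) ^ (i : ℕ)) •
      ((QuotientAddGroup.mk' _).comp ((incl C G (nerveFace C i x)).comp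
        ((((δ (x.obj i)).app (Opposite.op (SimplexCategory.mk n))).hom : An G n →+ An G n).comp
          ((G.δ i).hom : An G (n + 1) →+ An G n))))

lemma nerveFace_basept {n : ℕ} (i : Fin (n + 2)) :
    nerveFace C i (basept C a₀ (n + 1)) = basept C a₀ n := rfl

/-- The twisted differential `∂_{n+1} : C_{n+1} → C_n`. -/
noncomputable def bdry (δ : C → (G ⟶ G)) (n : ℕ) :
    Cn C G a₀ (n + 1) →+ Cn C G a₀ n :=
  QuotientAddGroup.lift _ (bdryAux C G a₀ δ n) (by
    rintro _ ⟨g, rfl⟩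
    show bdryAux C G a₀ δ n (incl C G (basept C a₀ (n + 1)) g) = 0
    rw [show incl C G (basept C a₀ (n+1)) g = DirectSum.of (fun _ : ComposableArrows C (n+1) => An G (n+1)) (basept C a₀ (n+1)) g from rfl,
      bdryAux, DirectSum.toAddMonoid_of]
    rw [AddMonoidHom.finset_sum_apply]
    refine Finset.sum_eq_zero fun i _ => ?_
    rw [AddMonoidHom.smul_apply, AddMonoidHom.comp_apply, QuotientAddGroup.mk'_apply,
      nerveFace_basept]
    have h0 : ((incl C G (basept C a₀ n)).comp
        (AddMonoidHom.comp ((δ ((basept C a₀ (n + 1)).obj i)).app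
          (Opposite.op (SimplexCategory.mk n))).hom (G.δ i).hom)) g ∈
        (incl C G (basept C a₀ n)).range :=
      ⟨(AddMonoidHom.comp ((δ ((basept C a₀ (n + 1)).obj i)).app
          (Opposite.op (SimplexCategory.mk n))).hom (G.δ i).hom) g, rfl⟩
    rw [(QuotientAddGroup.eq_zero_iff _).mpr h0, smul_zero])

end TwistedAb


section Aux

namespace TwistedAb

variable {C : Type u} [SmallCategory C] {G : SimplicialObject AddCommGrpCat.{u}}

omit [SmallCategory C] in
lemma nat_elem (δ : C → (G ⟶ G)) (v : C) {n : ℕ} (i : Fin (n+2)) (g : An G (n+1)) :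
    ((δ v).app (Opposite.op (SimplexCategory.mk n))) (G.δ i g)
      = G.δ i (((δ v).app (Opposite.op (SimplexCategory.mk (n+1)))) g) := by
  show ((δ v).app _) ((G.map (SimplexCategory.δ i).op) g)
      = (G.map (SimplexCategory.δ i).op) (((δ v).app _) g)
  rw [← comp_apply, ← comp_apply, NatTrans.naturality]

omit [SmallCategory C] in
lemma comm_elem (δ : C → (G ⟶ G)) {v w : C} (h : δ v ≫ δ w = δ w ≫ δ v) {n : ℕ}
    (g : An G n) :
    ((δ w).app (Opposite.op (SimplexCategory.mk n)))
        (((δ v).app (Opposite.op (SimplexCategory.mk n))) g)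
      = ((δ v).app (Opposite.op (SimplexCategory.mk n)))
        (((δ w).app (Opposite.op (SimplexCategory.mk n))) g) := by
  have h1 := ConcreteCategory.congr_hom
    (congr_arg (fun φ : G ⟶ G => φ.app (Opposite.op (SimplexCategory.mk n))) h) g
  simpa using h1

omit [SmallCategory C] in
lemma dd_elem {n : ℕ} {i : Fin (n + 3)} {j : Fin (n + 2)} (H : (i:ℕ) ≤ (j:ℕ))
    (g : An G (n+2)) :
    G.δ (i.castLT (Nat.lt_of_le_of_lt H j.is_lt)) (G.δ j.succ g) = G.δ j (G.δ i g) := by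
  have h1 := ConcreteCategory.congr_hom
    (SimplicialObject.δ_comp_δ'' (X := G) (i := i) (j := j) H) g
  simpa using h1

lemma nerveFace_nerveFace {n : ℕ} {i : Fin (n + 3)} {j : Fin (n + 2)} (H : (i:ℕ) ≤ (j:ℕ))
    (x : ComposableArrows C (n+2)) :
    nerveFace C (i.castLT (Nat.lt_of_le_of_lt H j.is_lt)) (nerveFace C j.succ x)
      = nerveFace C j (nerveFace C i x) := by
  have h1 := types_congr_hom
    (SimplicialObject.δ_comp_δ'' (X := nerve C) (i := i) (j := j) H) x
  exact h1

variable (C G)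

lemma bdry_incl (a₀ : C) (δ : C → (G ⟶ G)) (n : ℕ) (x : ComposableArrows C (n+1))
    (g : An G (n+1)) :
    bdry C G a₀ δ n (QuotientAddGroup.mk' _ (incl C G x g))
      = ∑ i : Fin (n+2), ((-1:ℤ)^(i:ℕ)) •
          (QuotientAddGroup.mk' ((incl C G (basept C a₀ n)).range)
            (incl C G (nerveFace C i x)
              (((δ (x.obj i)).app (Opposite.op (SimplexCategory.mk n)))
                (G.δ i g)))) := by
  show bdryAux C G a₀ δ n (incl C G x g) = _
  rw [show incl C G x g
      = DirectSum.of (fun _ : ComposableArrows C (n+1) => An G (n+1)) x g from rfl,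
    bdryAux, DirectSum.toAddMonoid_of, AddMonoidHom.finset_sum_apply]
  refine Finset.sum_congr rfl fun i _ => ?_
  rw [AddMonoidHom.smul_apply]
  rfl

lemma pair_T (a₀ : C) (δ : C → (G ⟶ G))
    (hcomm : ∀ v w : C, (Nonempty (v ⟶ w) ∨ Nonempty (w ⟶ v)) →
      δ v ≫ δ w = δ w ≫ δ v)
    {n : ℕ} (x : ComposableArrows C (n+2)) (g : An G (n+2))
    {i : Fin (n+3)} {j : Fin (n+2)} (H : (i:ℕ) ≤ (j:ℕ)) :
    (QuotientAddGroup.mk' ((incl C G (basept C a₀ n)).range))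
      (incl C G (nerveFace C j (nerveFace C i x))
        (((δ ((nerveFace C i x).obj j)).app (Opposite.op (SimplexCategory.mk n)))
          (G.δ j (((δ (x.obj i)).app (Opposite.op (SimplexCategory.mk (n+1))))
            (G.δ i g)))))
    = (QuotientAddGroup.mk' ((incl C G (basept C a₀ n)).range))
      (incl C G (nerveFace C (i.castLT (Nat.lt_of_le_of_lt H j.is_lt))
          (nerveFace C j.succ x))
        (((δ ((nerveFace C j.succ x).obj
              (i.castLT (Nat.lt_of_le_of_lt H j.is_lt)))).app
            (Opposite.op (SimplexCategory.mk n)))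
          (G.δ (i.castLT (Nat.lt_of_le_of_lt H j.is_lt))
            (((δ (x.obj j.succ)).app (Opposite.op (SimplexCategory.mk (n+1))))
              (G.δ j.succ g))))) := by
  have hv2 : (nerveFace C i x).obj j = x.obj j.succ := by
    show x.obj (i.succAbove j) = _
    congr 1
    exact Fin.succAbove_of_le_castSucc _ _ (by simpa [Fin.le_def] using H)
  have hv1 : (nerveFace C j.succ x).obj (i.castLT (Nat.lt_of_le_of_lt H j.is_lt))
      = x.obj i := by
    show x.obj (j.succ.succAbove (i.castLT (Nat.lt_of_le_of_lt H j.is_lt))) = _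
    congr 1
    rw [Fin.succAbove_of_castSucc_lt _ _ (by
        simp only [Fin.lt_def, Fin.coe_castSucc, Fin.coe_castLT, Fin.val_succ]
        omega),
      Fin.castSucc_castLT]
  rw [nerveFace_nerveFace H x, hv1, hv2]
  congr 1
  have hle : (i : Fin (n+3)) ≤ j.succ := by
    rw [Fin.le_def, Fin.val_succ]; omega
  have hc := hcomm (x.obj i) (x.obj j.succ) (Or.inl ⟨x.map (homOfLE hle)⟩)
  rw [← nat_elem δ (x.obj i) j (G.δ i g),
    comm_elem δ hc,
    ← nat_elem δ (x.obj j.succ) (i.castLT (Nat.lt_of_le_of_lt H j.is_lt)) (G.δ j.succ g),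
    dd_elem H g]

end TwistedAb

end Aux

/-- for a twisted structure `δ` on a small category `C` (with base object `a₀`)
with coefficients in a simplicial abelian group `G`, the twisted differentials on
`C_n = (⊕_{x ∈ N(C)_n} (G_n)_x)/(G_n)_{a₀ⁿ}` satisfy `∂_n ∘ ∂_{n+1} = 0`, so `{C_n, ∂_n}` is
a chain complex of abelian groups. -/
theorem TwistedAb.bdry_comp_bdry {C : Type u} [SmallCategory C]
    (G : SimplicialObject AddCommGrpCat.{u}) (a₀ : C) (δ : C → (G ⟶ G))
    (hcomm : ∀ v w : C, (Nonempty (v ⟶ w) ∨ Nonempty (w ⟶ v)) →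
      δ v ≫ δ w = δ w ≫ δ v)
    (n : ℕ) :
    (bdry C G a₀ δ n).comp (bdry C G a₀ δ (n + 1)) = 0 := by
  refine QuotientAddGroup.addMonoidHom_ext _ (DirectSum.addHom_ext fun x g => ?_)
  show bdry C G a₀ δ n (bdry C G a₀ δ (n+1)
      (QuotientAddGroup.mk' _ (incl C G x g))) = 0
  rw [bdry_incl, map_sum]
  set T : Fin (n+3) → Fin (n+2) → Cn C G a₀ n := fun i j =>
    (QuotientAddGroup.mk' ((incl C G (basept C a₀ n)).range))
      (incl C G (nerveFace C j (nerveFace C i x))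
        (((δ ((nerveFace C i x).obj j)).app (Opposite.op (SimplexCategory.mk n)))
          (G.δ j (((δ (x.obj i)).app (Opposite.op (SimplexCategory.mk (n+1))))
            (G.δ i g))))) with hT
  have e2 : ∀ i : Fin (n+3),
      bdry C G a₀ δ n (((-1:ℤ)^(i:ℕ)) •
        (QuotientAddGroup.mk' ((incl C G (basept C a₀ (n+1))).range)
          (incl C G (nerveFace C i x)
            (((δ (x.obj i)).app (Opposite.op (SimplexCategory.mk (n+1))))
              (G.δ i g)))))
      = ∑ j : Fin (n+2), (((-1:ℤ)^(i:ℕ)) * ((-1:ℤ)^(j:ℕ))) • T i j := by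
    intro i
    rw [map_zsmul, bdry_incl, Finset.smul_sum]
    exact Finset.sum_congr rfl fun j _ => (smul_smul _ _ _)
  rw [Finset.sum_congr rfl fun i _ => e2 i, ← Finset.sum_product']
  let P := Fin (n + 3) × Fin (n + 2)
  let S : Finset P := Finset.univ.filter fun p : P => (p.1 : ℕ) ≤ (p.2 : ℕ)
  erw [← Finset.sum_add_sum_compl S, ← eq_neg_iff_add_eq_zero, ← Finset.sum_neg_distrib]
  let φ : ∀ p : P, p ∈ S → P := fun p hp =>
    (p.2.succ, p.1.castLT (Nat.lt_of_le_of_lt (Finset.mem_filter.mp hp).2 p.2.is_lt))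
  apply Finset.sum_bij φ
  · intro p hp
    simp only [S, Finset.mem_univ, Finset.compl_filter, Finset.mem_filter, true_and,
      Fin.val_succ, Fin.coe_castLT, φ] at hp ⊢
    omega
  · rintro ⟨i, j⟩ hij ⟨i', j'⟩ hij' h
    rw [Prod.mk.injEq] at h ⊢
    refine ⟨?_, Fin.succ_injective _ (by exact h.1)⟩
    have := congr_arg Fin.castSucc h.2
    simpa [Fin.castSucc_castLT] using this
  · rintro ⟨i', j'⟩ hij'
    simp only [S, Finset.compl_filter, not_le, Finset.mem_filter, Finset.mem_univ,
      true_and] at hij'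
    have hne : i' ≠ 0 := by
      rintro rfl; simp at hij'
    refine ⟨(j'.castSucc, i'.pred hne), ?_, ?_⟩
    · simp only [S, Finset.mem_filter, Finset.mem_univ, true_and, Fin.coe_castSucc,
        Fin.coe_pred]
      omega
    · simp only [φ, Fin.succ_pred]
      refine Prod.ext rfl (Fin.ext ?_)
      simp
  · rintro ⟨i, j⟩ hp
    have H : (i : ℕ) ≤ (j : ℕ) := (Finset.mem_filter.mp hp).2
    show ((-1:ℤ)^(i:ℕ) * (-1:ℤ)^(j:ℕ)) • T i j
      = -(((-1:ℤ)^((j.succ : Fin (n+3)) : ℕ) * (-1:ℤ)^((i.castLT _ : Fin (n+2)) : ℕ)) •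
          T j.succ (i.castLT (Nat.lt_of_le_of_lt H j.is_lt)))
    simp only [hT]
    rw [pair_T C G a₀ δ hcomm x g H]
    rw [← neg_smul]
    congr 1
    simp only [Fin.val_succ, Fin.coe_castLT]
    ring
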